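/- Let S be a set and F = FreeGroup(S) with canonical map of : S → F. For every crossed module (T, G, φ, ∂) of groups and all functions a : S → T and b : S → G, there exists a unique morphism of crossed modules (f_T, f_G) : L(F) → (T, G, φ, ∂) with f_T(η(of(s))) = a(s) and f_G(ι₁(of(s))) = b(s) for all s ∈ S. (Thus L(FreeGroup(S)) is the free crossed module of groups on the set S.) -/

import Mathlib

open Function
open scoped Monoid.Coprod

/-- `π_B : B ∗ X →* B`, induced by the identity on `B` and trivial on `X`. -/
def piHom (B X : Type*) [Group B] [Group X] : (B ∗ X) →* B :=
  Monoid.Coprod.lift (MonoidHom.id B) (1 : X →* B)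

/-- `B ♭ X = ker (π_B : B ∗ X →* B)`. -/
def flatSub (B X : Type*) [Group B] [Group X] : Subgroup (B ∗ X) :=
  (piHom B X).ker

instance flatSub_normal (B X : Type*) [Group B] [Group X] : (flatSub B X).Normal :=
  MonoidHom.normal_ker (piHom B X)

/-- `η : H →* H ♭ H`, the corestriction of the second coproduct inclusion. -/
def etaHom (H : Type*) [Group H] : H →* flatSub H H :=
  MonoidHom.codRestrict (Monoid.Coprod.inr : H →* H ∗ H) (flatSub H H)
    (by intro x; simp [flatSub, piHom, MonoidHom.mem_ker])
/-- `(T, G, φ, d)` is a crossed module of groups. -/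
structure IsXMod {T G : Type*} [Group T] [Group G]
    (φ : G →* MulAut T) (d : T →* G) : Prop where
  compat : ∀ (g : G) (t : T), d (φ g t) = g * d t * g⁻¹
  peiffer : ∀ t t' : T, φ (d t) t' = t * t' * t⁻¹

/-- `(fT, fG)` is a morphism of crossed modules from `(T, G, φ, d)` to
`(T', G', φ', d')`. -/
def XModHom {T G T' G' : Type*} [Group T] [Group G] [Group T'] [Group G']
    (φ : G →* MulAut T) (d : T →* G) (φ' : G' →* MulAut T') (d' : T' →* G')
    (fT : T →* T') (fG : G →* G') : Prop :=
  d'.comp fT = fG.comp d ∧ ∀ (g : G) (t : T), fT (φ g t) = φ' (fG g) (fT t)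

/-- A crossed module `(T, G, φ, d)` is projective if every surjective morphism of
crossed modules onto it admits a section that is a morphism of crossed modules. -/
def IsProjXMod {T G : Type*} [Group T] [Group G]
    (φ : G →* MulAut T) (d : T →* G) : Prop :=
  ∀ (T' G' : Type*) [Group T'] [Group G'] (φ' : G' →* MulAut T') (d' : T' →* G'),
    IsXMod φ' d' →
    ∀ (fT : T' →* T) (fG : G' →* G), XModHom φ' d' φ d fT fG →
      Function.Surjective fT → Function.Surjective fG →
      ∃ (gT : T →* T') (gG : G →* G'), XModHom φ d φ' d' gT gG ∧
        fT.comp gT = MonoidHom.id T ∧ fG.comp gG = MonoidHom.id G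

/-- The conjugation action core of the semidirect product `Q ⋊[ψ] P` on `Q`:
`(q, x)` acts by `q' ↦ q * ψ x q' * q⁻¹`. -/
def sdConj {Q P : Type*} [Group Q] [Group P] (ψ : P →* MulAut Q) :
    (Q ⋊[ψ] P) →* MulAut Q :=
  SemidirectProduct.lift (MulAut.conj) ψ (by
    intro x
    ext q q'
    simp [MulAut.conj, mul_assoc])

section AuxXMod

variable {S : Type*} {T G : Type*} [Group T] [Group G]
  (φ : G →* MulAut T) (d : T →* G)

lemma peiffer_inv (hxm : IsXMod φ d) (t t' : T) :
    φ (d t)⁻¹ t' = t⁻¹ * t' * t := by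
  apply (φ (d t)).injective
  have h1 : φ (d t) (φ (d t)⁻¹ t') = t' := by
    rw [← MulAut.mul_apply, ← map_mul, mul_inv_cancel, map_one, MulAut.one_apply]
  rw [h1, hxm.peiffer]
  group

/-- The homomorphism `ν : T ⋊[φ] G →* G`, `(t, g) ↦ d t * g`. -/
def nuHom (hxm : IsXMod φ d) : (T ⋊[φ] G) →* G :=
  SemidirectProduct.lift d (MonoidHom.id G) (fun g => by
    ext t
    simp [hxm.compat])

variable (a : S → T) (b : S → G)

/-- `θ : F ∗ F →* T ⋊[φ] G`. -/
def thetaHom : (FreeGroup S ∗ FreeGroup S) →* T ⋊[φ] G :=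
  Monoid.Coprod.lift
    (FreeGroup.lift fun s => SemidirectProduct.inr (b s))
    (FreeGroup.lift fun s => ⟨(a s)⁻¹, d (a s)⟩)

lemma nu_theta (hxm : IsXMod φ d) :
    (nuHom φ d hxm).comp (thetaHom φ d a b) =
      (FreeGroup.lift b).comp (piHom (FreeGroup S) (FreeGroup S)) := by
  apply Monoid.Coprod.hom_ext <;>
    refine FreeGroup.ext_hom _ _ fun s => ?_ <;>
      simp [nuHom, thetaHom, piHom, SemidirectProduct.lift]

lemma theta_right (hxm : IsXMod φ d) {w : FreeGroup S ∗ FreeGroup S}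
    (hw : w ∈ flatSub (FreeGroup S) (FreeGroup S)) :
    (thetaHom φ d a b w).right = (d (thetaHom φ d a b w).left)⁻¹ := by
  have h : nuHom φ d hxm (thetaHom φ d a b w) = 1 := by
    have := DFunLike.congr_fun (nu_theta φ d a b hxm) w
    simp only [MonoidHom.comp_apply] at this
    rw [this, MonoidHom.mem_ker.mp hw, map_one]
  have h2 : d (thetaHom φ d a b w).left * (thetaHom φ d a b w).right = 1 := by
    simpa [nuHom, SemidirectProduct.lift] using h
  exact (inv_eq_of_mul_eq_one_right h2).symm

/-- The `T`-component of the morphism out of `L(FreeGroup S)`. -/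
def fTHom (hxm : IsXMod φ d) : flatSub (FreeGroup S) (FreeGroup S) →* T where
  toFun w := ((thetaHom φ d a b w.1).left)⁻¹
  map_one' := by simp
  map_mul' w₁ w₂ := by
    have h1 := theta_right φ d a b hxm w₁.2
    show ((thetaHom φ d a b) ((w₁ : FreeGroup S ∗ FreeGroup S) * w₂)).left⁻¹ = _
    rw [map_mul, SemidirectProduct.mul_left, h1, peiffer_inv φ d hxm]
    group

/-- The `G`-component of the morphism out of `L(FreeGroup S)`. -/
def fGHom : (FreeGroup S ∗ FreeGroup S) →* G :=
  SemidirectProduct.rightHom.comp (thetaHom φ d a b)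

end AuxXMod

/-- `L(FreeGroup S)` is the free crossed module of groups on the set `S`: for every
crossed module `(T, G, φ, d)` and functions `a : S → T`, `b : S → G` there is a unique
morphism of crossed modules `(fT, fG) : L(FreeGroup S) → (T, G, φ, d)` with
`fT (η (of s)) = a s` and `fG (ι₁ (of s)) = b s` for all `s : S`. -/
theorem LFree_universal_property {S T G : Type*} [Group T] [Group G]
    (φ : G →* MulAut T) (d : T →* G) (hxm : IsXMod φ d)
    (a : S → T) (b : S → G) :
    ∃! fp : (flatSub (FreeGroup S) (FreeGroup S) →* T) ×
        ((FreeGroup S ∗ FreeGroup S) →* G),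
      XModHom
        (MulAut.conjNormal :
          (FreeGroup S ∗ FreeGroup S) →* MulAut (flatSub (FreeGroup S) (FreeGroup S)))
        (flatSub (FreeGroup S) (FreeGroup S)).subtype φ d fp.1 fp.2 ∧
      (∀ s : S, fp.1 (etaHom (FreeGroup S) (FreeGroup.of s)) = a s) ∧
      (∀ s : S, fp.2 ((Monoid.Coprod.inl : FreeGroup S →* FreeGroup S ∗ FreeGroup S)
        (FreeGroup.of s)) = b s) := by
  set F := FreeGroup S
  set fT := fTHom φ d a b hxm with hfT
  set fG := fGHom φ d a b with hfG
  -- basic facts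
  have hfTapp : ∀ w : flatSub F F, fT w = ((thetaHom φ d a b w.1).left)⁻¹ :=
    fun w => rfl
  have hfGapp : ∀ w : F ∗ F, fG w = (thetaHom φ d a b w).right := fun w => rfl
  have heta : ∀ x : F, ((etaHom F x : flatSub F F) : F ∗ F) = Monoid.Coprod.inr x :=
    fun x => rfl
  have hequiv : ∀ (g : F ∗ F) (w : flatSub F F),
      fT (MulAut.conjNormal g w) = φ (fG g) (fT w) := by
    intro g w
    have hl : ((MulAut.conjNormal g w : flatSub F F) : F ∗ F) = g * w * g⁻¹ :=
      MulAut.conjNormal_apply g w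
    rw [hfTapp, hl, map_mul, map_mul, map_inv]
    set p := thetaHom φ d a b g
    set q := thetaHom φ d a b w.1
    have hq : q.right = (d q.left)⁻¹ := theta_right φ d a b hxm w.2
    have hleft : (p * q * p⁻¹).left = φ p.right q.left := by
      rw [SemidirectProduct.mul_left, SemidirectProduct.mul_left,
        SemidirectProduct.inv_left, SemidirectProduct.mul_right, hq,
        ← MulAut.mul_apply, ← map_mul]
      have hdrw : p.right * (d q.left)⁻¹ * p.right⁻¹ = (d (φ p.right q.left))⁻¹ := by
        rw [hxm.compat]
        group
      rw [hdrw, peiffer_inv φ d hxm]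
      group
    rw [hleft, hfTapp, hfGapp, ← map_inv]
  -- the XModHom property for our candidate
  have hcomm : d.comp fT = fG.comp (flatSub F F).subtype := by
    ext w
    simp only [MonoidHom.comp_apply, Subgroup.coe_subtype]
    rw [hfTapp, map_inv, hfGapp, theta_right φ d a b hxm w.2]
  have hfTeta : ∀ s : S, fT (etaHom F (FreeGroup.of s)) = a s := by
    intro s
    rw [hfTapp]
    have : ((etaHom F (FreeGroup.of s) : flatSub F F) : F ∗ F)
        = Monoid.Coprod.inr (FreeGroup.of s) := rfl
    rw [this]
    simp [thetaHom]
  have hfGinl : ∀ s : S,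
      fG ((Monoid.Coprod.inl : F →* F ∗ F) (FreeGroup.of s)) = b s := by
    intro s
    rw [hfGapp]
    simp [thetaHom]
  refine ⟨⟨fT, fG⟩, ⟨⟨hcomm, hequiv⟩, hfTeta, hfGinl⟩, ?_⟩
  -- uniqueness
  rintro ⟨fT', fG'⟩ ⟨⟨hcomm', hequiv'⟩, ha', hb'⟩
  have hGeq : fG' = fG := by
    apply Monoid.Coprod.hom_ext <;> refine FreeGroup.ext_hom _ _ fun s => ?_
    · simpa using (hb' s).trans (hfGinl s).symm
    · have h1 : fG' (Monoid.Coprod.inr (FreeGroup.of s)) = d (a s) := by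
        rw [← heta, ← ha' s, ← MonoidHom.comp_apply, hcomm']
        simp
        rfl
      have h2 : fG (Monoid.Coprod.inr (FreeGroup.of s)) = d (a s) := by
        rw [← heta, ← hfTeta s, ← MonoidHom.comp_apply, hcomm]
        simp
      simpa using h1.trans h2.symm
  -- the equalizer subgroup of fT' and fT, pushed into F ∗ F
  have hTeq : fT' = fT := by
    set E : Subgroup (flatSub F F) := MonoidHom.eqLocus fT' fT with hE
    set M : Subgroup (F ∗ F) := E.map (flatSub F F).subtype with hM
    have hMnormal : M.Normal := by
      constructor
      rintro n hn g
      rcases hn with ⟨u, hu, rfl⟩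
      refine ⟨MulAut.conjNormal g u, ?_, (MulAut.conjNormal_apply g u).symm⟩
      show fT' _ = fT _
      rw [hequiv' g u, hequiv g u, hGeq]
      exact congrArg _ hu
    have hsub : Set.range (Monoid.Coprod.inr : F →* F ∗ F) ⊆ (M : Set (F ∗ F)) := by
      rintro _ ⟨x, rfl⟩
      have hagree : fT'.comp (etaHom F) = fT.comp (etaHom F) :=
        FreeGroup.ext_hom _ _ fun s => by
          simp only [MonoidHom.comp_apply]
          rw [ha' s, hfTeta s]
      exact ⟨etaHom F x, DFunLike.congr_fun hagree x, (heta x).symm⟩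
    have hflat : flatSub F F ≤ Subgroup.normalClosure
        (Set.range (Monoid.Coprod.inr : F →* F ∗ F)) := by
      set N := Subgroup.normalClosure
        (Set.range (Monoid.Coprod.inr : F →* F ∗ F)) with hN
      intro w hw
      have hq : (QuotientGroup.mk' N).comp
          ((Monoid.Coprod.inl : F →* F ∗ F).comp (piHom F F))
            = QuotientGroup.mk' N := by
        apply Monoid.Coprod.hom_ext <;> refine FreeGroup.ext_hom _ _ fun s => ?_
        · simp [piHom]
        · simp only [MonoidHom.comp_apply]
          have h1 : piHom F F ((Monoid.Coprod.inr : F →* F ∗ F)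
              (FreeGroup.of s)) = 1 := by simp [piHom]
          rw [h1, map_one]
          symm
          exact (QuotientGroup.eq_one_iff _).mpr
            (Subgroup.subset_normalClosure (Set.mem_range_self _))
      have hw1 : piHom F F w = 1 := MonoidHom.mem_ker.mp hw
      have : QuotientGroup.mk' N w = 1 := by
        rw [← DFunLike.congr_fun hq w]
        simp [hw1]
      exact (QuotientGroup.eq_one_iff w).mp this
    have hle : flatSub F F ≤ M :=
      le_trans hflat (Subgroup.normalClosure_le_normal hsub)
    ext w
    rcases hle w.2 with ⟨u, hu, huw⟩
    have : u = w := Subtype.ext huw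
    rw [← this]
    exact hu
  exact Prod.ext hTeq hGeq
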